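/- Let x : Fin n → F be a nonzero vector all of whose entries lie in the image of the constant embedding 𝔽q → F, and let g ∈ GL n F. Then for every nonempty subset S of GL n F whose elements all lie in GL n R, there exists s₀ ∈ S such that ‖x·(s₀*g : Matrix (Fin n) (Fin n) F)‖ ≤ ‖x·(s*g : Matrix (Fin n) (Fin n) F)‖ for all s ∈ S; i.e., the set {‖x·(s*g)‖ : s ∈ S} has a positive minimal element. (Proposition 10, second part.) -/

import Mathlib

/- Setting: `F = 𝔽q((X))` is the field of formal Laurent series over a finite field `𝔽q`,
with valuation `v = Valued.v : F → ℤₘ₀` (normalized by `v X = ofAdd (-1)`), ring of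
integers `O = 𝔽q[[X]] = {f | v f ≤ 1}`. -/

open scoped Multiplicative

noncomputable section

variable (𝔽q : Type*) [Field 𝔽q] [Fintype 𝔽q]

/-- `F = 𝔽q((X))`, the field of formal Laurent series over `𝔽q`. -/
abbrev F : Type _ := LaurentSeries 𝔽q

/-- The uniformizer `X` of `F`. -/
def XX : F 𝔽q := ((PowerSeries.X : PowerSeries 𝔽q) : LaurentSeries 𝔽q)

/-- The sup-norm `‖x‖ = sup_i v (x i)` of a row vector over `F`. -/
def vnorm {n : ℕ} (x : Fin n → F 𝔽q) : WithZero (Multiplicative ℤ) :=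
  Finset.univ.sup fun i => Valued.v (x i)

/-- `f` lies in the ring of integers `O = 𝔽q[[X]]` iff `v f ≤ 1`. -/
def inO (f : F 𝔽q) : Prop := Valued.v f ≤ 1

/-- `f` lies in `R = 𝔽q[X⁻¹]`: a Laurent series with finite support contained in
nonpositive degrees. -/
def inR (f : F 𝔽q) : Prop := f.support.Finite ∧ ∀ d ∈ f.support, d ≤ 0

/-- `g ∈ GL n F` lies in `GL n O`: every entry of `g` and of `g⁻¹` lies in `O`. -/
def inGLO {n : ℕ} (g : GL (Fin n) (F 𝔽q)) : Prop :=
  (∀ i j, inO 𝔽q ((g : Matrix (Fin n) (Fin n) (F 𝔽q)) i j)) ∧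
  (∀ i j, inO 𝔽q ((↑(g⁻¹) : Matrix (Fin n) (Fin n) (F 𝔽q)) i j))

/-- `γ ∈ GL n F` lies in `GL n R`: every entry of `γ` and of `γ⁻¹` lies in `R`. -/
def inGLR {n : ℕ} (γ : GL (Fin n) (F 𝔽q)) : Prop :=
  (∀ i j, inR 𝔽q ((γ : Matrix (Fin n) (Fin n) (F 𝔽q)) i j)) ∧
  (∀ i j, inR 𝔽q ((↑(γ⁻¹) : Matrix (Fin n) (Fin n) (F 𝔽q)) i j))

-- auxiliary lemmas

lemma inR_zero' : inR 𝔽q 0 := by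
  constructor <;> simp [HahnSeries.support_zero]

lemma inR_add' {f g : F 𝔽q} (hf : inR 𝔽q f) (hg : inR 𝔽q g) : inR 𝔽q (f + g) := by
  refine ⟨(hf.1.union hg.1).subset (HahnSeries.support_add_subset f g), fun d hd => ?_⟩
  rcases HahnSeries.support_add_subset f g hd with h | h
  exacts [hf.2 d h, hg.2 d h]

lemma inR_mul' {f g : F 𝔽q} (hf : inR 𝔽q f) (hg : inR 𝔽q g) : inR 𝔽q (f * g) := by
  refine ⟨((hf.1.add hg.1)).subset HahnSeries.support_mul_subset, fun d hd => ?_⟩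
  obtain ⟨a, ha, b, hb, rfl⟩ := HahnSeries.support_mul_subset hd
  simpa using add_nonpos (hf.2 a ha) (hg.2 b hb)

lemma inR_C' (c : 𝔽q) : inR 𝔽q (HahnSeries.C c) := by
  refine ⟨Set.Finite.subset (Set.finite_singleton 0) ?_, fun d hd => ?_⟩
  · exact HahnSeries.support_single_subset
  · have := HahnSeries.support_single_subset hd
    simp_all

lemma inR_sum' {ι : Type*} (s : Finset ι) (f : ι → F 𝔽q) (h : ∀ i ∈ s, inR 𝔽q (f i)) :
    inR 𝔽q (∑ i ∈ s, f i) := by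
  classical
  induction s using Finset.induction_on with
  | empty => simpa using inR_zero' 𝔽q
  | insert _ _ hni ih =>
    rw [Finset.sum_insert hni]
    exact inR_add' 𝔽q (h _ (Finset.mem_insert_self _ _))
      (ih fun i hi => h i (Finset.mem_insert_of_mem hi))

lemma one_le_v_of_inR {f : F 𝔽q} (hR : inR 𝔽q f) (hf : f ≠ 0) : (1 : WithZero (Multiplicative ℤ)) ≤ Valued.v f := by
  by_contra h
  push_neg at h
  have h1 : Valued.v f ≤ ((Multiplicative.ofAdd (-1 : ℤ) : Multiplicative ℤ) : WithZero (Multiplicative ℤ)) := by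
    rcases eq_or_ne (Valued.v f) 0 with h0 | h0
    · simp [h0]
    · lift Valued.v f to Multiplicative ℤ using h0 with m hm
      rw [WithZero.coe_le_coe]
      have hlt : m < Multiplicative.ofAdd (0 : ℤ) := by
        rw [← WithZero.coe_lt_coe]; simpa using h
      have h2 : Multiplicative.toAdd m ≤ -1 := by
        have := Multiplicative.toAdd_lt.mpr hlt
        simp at this; omega
      rw [← Multiplicative.toAdd_le]
      simpa using h2
  have := (LaurentSeries.valuation_le_iff_coeff_lt_eq_zero 𝔽q (D := 1)).mp h1
  obtain ⟨d, hd⟩ := HahnSeries.support_nonempty_iff.mpr hf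
  exact (HahnSeries.mem_support _ _ |>.mp hd) (this d (by have := hR.2 d hd; omega))

lemma exists_min_zm0 {T : Set (WithZero (Multiplicative ℤ))} (hT : T.Nonempty) {c : WithZero (Multiplicative ℤ)} (hc : c ≠ 0)
    (hbd : ∀ t ∈ T, c ≤ t) : ∃ t₀ ∈ T, ∀ t ∈ T, t₀ ≤ t := by
  set P : ℤ → Prop := fun k => ((Multiplicative.ofAdd k : Multiplicative ℤ) : WithZero (Multiplicative ℤ)) ∈ T with hP
  have hne : ∀ t ∈ T, t ≠ 0 := fun t ht h0 => hc (le_antisymm (h0 ▸ hbd t ht) zero_le')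
  have hrep : ∀ t ∈ T, ∃ k : ℤ, ((Multiplicative.ofAdd k : Multiplicative ℤ) : WithZero (Multiplicative ℤ)) = t := by
    intro t ht
    refine ⟨Multiplicative.toAdd (WithZero.unzero (hne t ht)), ?_⟩
    simp [WithZero.coe_unzero]
  have Hinh : ∃ k, P k := by
    obtain ⟨t, ht⟩ := hT
    obtain ⟨k, hk⟩ := hrep t ht
    exact ⟨k, by rw [hP]; simpa [hk] using ht⟩
  have Hbd : ∃ b : ℤ, ∀ k : ℤ, P k → b ≤ k := by
    refine ⟨Multiplicative.toAdd (WithZero.unzero hc), fun k hk => ?_⟩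
    have := hbd _ hk
    rw [← WithZero.coe_unzero hc, WithZero.coe_le_coe, ← Multiplicative.toAdd_le] at this
    simpa using this
  obtain ⟨lb, hlbP, hlb⟩ := Int.exists_least_of_bdd Hbd Hinh
  refine ⟨_, hlbP, fun t ht => ?_⟩
  obtain ⟨k, hk⟩ := hrep t ht
  have hPk : P k := by rw [hP]; simpa [hk] using ht
  rw [← hk, WithZero.coe_le_coe, ← Multiplicative.toAdd_le]
  simpa using hlb k hPk

set_option maxHeartbeats 1000000 in
/-- **Proposition 10, second part.** For `x` a nonzero constant vector, `g ∈ GL n F`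
and any nonempty subset `S` of `GL n R`, the set `{‖x ⬝ (s * g)‖ : s ∈ S}` has a
positive minimal element. -/
theorem exists_min_norm (n : ℕ) (hn : 0 < n)
    (x : Fin n → F 𝔽q) (hx : x ≠ 0)
    (hxconst : ∀ i, ∃ c : 𝔽q, x i = HahnSeries.C c)
    (g : GL (Fin n) (F 𝔽q))
    (S : Set (GL (Fin n) (F 𝔽q))) (hS : S.Nonempty) (hSR : ∀ s ∈ S, inGLR 𝔽q s) :
    ∃ s₀ ∈ S,
      0 < vnorm 𝔽q (Matrix.vecMul x
          ((s₀ * g : GL (Fin n) (F 𝔽q)) : Matrix (Fin n) (Fin n) (F 𝔽q))) ∧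
      ∀ s ∈ S,
        vnorm 𝔽q (Matrix.vecMul x
            ((s₀ * g : GL (Fin n) (F 𝔽q)) : Matrix (Fin n) (Fin n) (F 𝔽q))) ≤
        vnorm 𝔽q (Matrix.vecMul x
            ((s * g : GL (Fin n) (F 𝔽q)) : Matrix (Fin n) (Fin n) (F 𝔽q))) := by
  classical
  set Minv : Matrix (Fin n) (Fin n) (F 𝔽q) := (↑(g⁻¹) : Matrix (Fin n) (Fin n) (F 𝔽q))
    with hMinv
  set C : WithZero (Multiplicative ℤ) := Finset.univ.sup (fun p : Fin n × Fin n => Valued.v (Minv p.1 p.2)) with hC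
  have hgMinv : (g : Matrix (Fin n) (Fin n) (F 𝔽q)) * Minv = 1 := by
    rw [hMinv, ← Units.val_mul, mul_inv_cancel, Units.val_one]
  have hCne : C ≠ 0 := by
    intro h0
    have hall : ∀ i j, Minv i j = 0 := by
      intro i j
      have h1 : Valued.v (Minv i j) ≤ C := by
        have h := Finset.le_sup (f := fun p : Fin n × Fin n => Valued.v (Minv p.1 p.2))
          (Finset.mem_univ (i, j))
        simpa [hC] using h
      rw [h0] at h1
      have : Valued.v (Minv i j) = 0 := le_antisymm h1 zero_le'
      exact (Valuation.zero_iff _).mp this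
    have : Minv = 0 := funext fun i => funext fun j => hall i j
    rw [this, mul_zero] at hgMinv
    have := congrFun (congrFun hgMinv ⟨0, hn⟩) ⟨0, hn⟩
    simp [Matrix.one_apply] at this
  -- key lower bound
  have key : ∀ s ∈ S, C⁻¹ ≤ vnorm 𝔽q (Matrix.vecMul x
      ((s * g : GL (Fin n) (F 𝔽q)) : Matrix (Fin n) (Fin n) (F 𝔽q))) := by
    intro s hs
    set y : Fin n → F 𝔽q := Matrix.vecMul x (s : Matrix (Fin n) (Fin n) (F 𝔽q)) with hy
    set z : Fin n → F 𝔽q := Matrix.vecMul x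
      ((s * g : GL (Fin n) (F 𝔽q)) : Matrix (Fin n) (Fin n) (F 𝔽q)) with hz
    have hzy : z = Matrix.vecMul y (g : Matrix (Fin n) (Fin n) (F 𝔽q)) := by
      rw [hy, hz, Matrix.vecMul_vecMul, Units.val_mul]
    have hyR : ∀ j, inR 𝔽q (y j) := by
      intro j
      rw [hy]
      show inR 𝔽q (∑ i, x i * (s : Matrix (Fin n) (Fin n) (F 𝔽q)) i j)
      refine inR_sum' 𝔽q _ _ fun i _ => ?_
      obtain ⟨c, hc⟩ := hxconst i
      exact inR_mul' 𝔽q (hc ▸ inR_C' 𝔽q c) ((hSR s hs).1 i j)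
    have hy0 : y ≠ 0 := by
      intro h0
      apply hx
      have : Matrix.vecMul y (((s⁻¹ : GL (Fin n) (F 𝔽q)) : Matrix (Fin n) (Fin n) (F 𝔽q))) = x := by
        rw [hy, Matrix.vecMul_vecMul]
        have hs1 : (s : Matrix (Fin n) (Fin n) (F 𝔽q)) *
            ((s⁻¹ : GL (Fin n) (F 𝔽q)) : Matrix (Fin n) (Fin n) (F 𝔽q)) = 1 := by
          rw [← Units.val_mul, mul_inv_cancel, Units.val_one]
        rw [hs1, Matrix.vecMul_one]
      rw [← this, h0, Matrix.zero_vecMul]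
    obtain ⟨i, hyi⟩ := Function.ne_iff.mp hy0
    have h1 : (1 : WithZero (Multiplicative ℤ)) ≤ Valued.v (y i) := one_le_v_of_inR 𝔽q (hyR i) hyi
    have hyz : y i = ∑ j, z j * Minv j i := by
      have : Matrix.vecMul z Minv = y := by
        rw [hzy, Matrix.vecMul_vecMul, hgMinv, Matrix.vecMul_one]
      rw [← this]
      rfl
    have h2 : Valued.v (y i) ≤ vnorm 𝔽q z * C := by
      rw [hyz]
      refine Valued.v.map_sum_le fun j _ => ?_
      rw [map_mul]
      refine mul_le_mul' ?_ ?_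
      · have h := Finset.le_sup (f := fun k => Valued.v (z k)) (Finset.mem_univ j)
        simpa [vnorm] using h
      · have h := Finset.le_sup (f := fun p : Fin n × Fin n => Valued.v (Minv p.1 p.2))
          (Finset.mem_univ (j, i))
        simpa [hC] using h
    have h3 : (1 : WithZero (Multiplicative ℤ)) ≤ vnorm 𝔽q z * C := le_trans h1 h2
    have h4 := mul_le_mul_right h3 C⁻¹
    have h5 : C⁻¹ * (vnorm 𝔽q z * C) = vnorm 𝔽q z := by
      rw [mul_comm (vnorm 𝔽q z) C, ← mul_assoc, inv_mul_cancel₀ hCne, one_mul]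
    rw [mul_one, h5] at h4
    exact h4
  -- extract the minimum
  set N : GL (Fin n) (F 𝔽q) → WithZero (Multiplicative ℤ) := fun s => vnorm 𝔽q (Matrix.vecMul x
      ((s * g : GL (Fin n) (F 𝔽q)) : Matrix (Fin n) (Fin n) (F 𝔽q))) with hN
  have hCinv : (C⁻¹ : WithZero (Multiplicative ℤ)) ≠ 0 := inv_ne_zero hCne
  obtain ⟨t₀, ⟨s₀, hs₀S, ht₀⟩, hmin⟩ :=
    exists_min_zm0 (T := N '' S) (hS.image N) hCinv (by rintro t ⟨s, hsS, rfl⟩; exact key s hsS)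
  refine ⟨s₀, hs₀S, ?_, fun s hsS => ?_⟩
  · have := key s₀ hs₀S
    exact lt_of_lt_of_le (zero_lt_iff.mpr hCinv) this
  · have h2 : N s₀ ≤ N s := ht₀ ▸ hmin (N s) ⟨s, hsS, rfl⟩
    show N s₀ ≤ N s
    exact h2
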